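/- Every minimum-weight codeword of a 2-dimensional product code is the Kronecker (outer) product of a minimum-weight codeword of C₁ and a minimum-weight codeword of C₂; consequently the number of codewords of weight d₁d₂ in the product code equals A^{(1)}_{d₁} · A^{(2)}_{d₂}. -/

import Mathlib

open Finset in
lemma zmod2_eq_of_ne_iff {a b : ZMod 2} (h : a ≠ 0 ↔ b ≠ 0) : a = b := by
  revert h; revert a b; decide

lemma zmod2_eq_one_of_ne {a : ZMod 2} (h : a ≠ 0) : a = 1 := by
  revert h; revert a; decide

open Finset in
lemma norm_prod_rows {N₁ N₂ : ℕ} (M : Matrix (Fin N₁) (Fin N₂) (ZMod 2)) :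
    hammingNorm (fun p : Fin N₁ × Fin N₂ => M p.1 p.2) = ∑ i, hammingNorm (M i) := by
  simp only [hammingNorm, Finset.card_filter, Fintype.sum_prod_type]

open Finset in
lemma norm_prod_cols {N₁ N₂ : ℕ} (M : Matrix (Fin N₁) (Fin N₂) (ZMod 2)) :
    hammingNorm (fun p : Fin N₁ × Fin N₂ => M p.1 p.2)
      = ∑ j, hammingNorm (fun i => M i j) := by
  simp only [hammingNorm, Finset.card_filter, Fintype.sum_prod_type_right]

open Finset in
lemma norm_outer {N₁ N₂ : ℕ} (u : Fin N₁ → ZMod 2) (v : Fin N₂ → ZMod 2) :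
    hammingNorm (fun p : Fin N₁ × Fin N₂ => u p.1 * v p.2)
      = hammingNorm u * hammingNorm v := by
  simp only [hammingNorm, Finset.card_filter, Fintype.sum_prod_type, mul_ne_zero_iff]
  rw [Finset.sum_mul_sum]
  refine Finset.sum_congr rfl fun i _ => Finset.sum_congr rfl fun j _ => ?_
  by_cases h1 : u i ≠ 0 <;> by_cases h2 : v j ≠ 0 <;> simp [h1, h2]

open Classical in
open Finset in
lemma row_structure {N₁ N₂ d₁ d₂ : ℕ}
    (C₁ : Submodule (ZMod 2) (Fin N₁ → ZMod 2)) (C₂ : Submodule (ZMod 2) (Fin N₂ → ZMod 2))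
    (hd₁ : IsLeast {w | ∃ c ∈ C₁, c ≠ 0 ∧ hammingNorm c = w} d₁)
    (hd₂ : IsLeast {w | ∃ c ∈ C₂, c ≠ 0 ∧ hammingNorm c = w} d₂)
    (M : Matrix (Fin N₁) (Fin N₂) (ZMod 2))
    (hrow : ∀ i, M i ∈ C₂) (hcol : ∀ j, (fun i => M i j) ∈ C₁)
    (hw : ∑ i, hammingNorm (M i) = d₁ * d₂) :
    (Finset.univ.filter (fun i => M i ≠ 0)).card = d₁ ∧
      ∀ i, M i ≠ 0 → hammingNorm (M i) = d₂ := by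
  have hd1pos : 0 < d₁ := by
    obtain ⟨c, _, hc0, hwc⟩ := hd₁.1
    rw [← hwc]; exact hammingNorm_pos_iff.mpr hc0
  have hd2pos : 0 < d₂ := by
    obtain ⟨c, _, hc0, hwc⟩ := hd₂.1
    rw [← hwc]; exact hammingNorm_pos_iff.mpr hc0
  set R := Finset.univ.filter (fun i => M i ≠ 0) with hR
  have hMne : ∃ i j, M i j ≠ 0 := by
    by_contra h
    push_neg at h
    have h0 : ∀ i, hammingNorm (M i) = 0 :=
      fun i => hammingNorm_eq_zero.mpr (funext (h i))
    have := Nat.mul_pos hd1pos hd2pos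
    simp only [h0, Finset.sum_const_zero] at hw
    omega
  obtain ⟨i₀, j₀, hij⟩ := hMne
  have hcolnorm : hammingNorm (fun i => M i j₀)
      = (Finset.univ.filter (fun i => M i j₀ ≠ 0)).card := rfl
  have hcolsub : (Finset.univ.filter (fun i => M i j₀ ≠ 0)) ⊆ R := by
    intro i hi
    simp only [hR, Finset.mem_filter, Finset.mem_univ, true_and] at hi ⊢
    exact fun hMi => hi (by rw [hMi]; rfl)
  have hcard1 : d₁ ≤ R.card := by
    have h1 : d₁ ≤ hammingNorm (fun i => M i j₀) :=
      hd₁.2 ⟨fun i => M i j₀, hcol j₀, fun h => hij (congrFun h i₀), rfl⟩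
    exact le_trans h1 (hcolnorm ▸ Finset.card_le_card hcolsub)
  have hsumR : ∑ i ∈ R, hammingNorm (M i) = d₁ * d₂ := by
    rw [← hw]
    refine Finset.sum_subset (Finset.subset_univ R) ?_
    intro i _ hi
    simp only [hR, Finset.mem_filter, Finset.mem_univ, true_and, not_not] at hi
    exact hammingNorm_eq_zero.mpr hi
  have hlb : ∀ i ∈ R, d₂ ≤ hammingNorm (M i) := by
    intro i hi
    simp only [hR, Finset.mem_filter, Finset.mem_univ, true_and] at hi
    exact hd₂.2 ⟨M i, hrow i, hi, rfl⟩
  have hconst : ∑ _i ∈ R, d₂ = R.card * d₂ := by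
    rw [Finset.sum_const, smul_eq_mul]
  have hRd2 : R.card * d₂ ≤ d₁ * d₂ := by
    rw [← hconst, ← hsumR]
    exact Finset.sum_le_sum hlb
  have hRcard : R.card = d₁ :=
    le_antisymm (Nat.le_of_mul_le_mul_right hRd2 hd2pos) hcard1
  refine ⟨hRcard, fun i hi => ?_⟩
  have hsums : ∑ _i ∈ R, d₂ = ∑ i ∈ R, hammingNorm (M i) := by
    rw [hconst, hRcard, hsumR]
  have := (Finset.sum_eq_sum_iff_of_le hlb).mp hsums
  exact (this i (by simp [hR, hi])).symm

open Classical in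
open Finset in
lemma min_weight_outer {N₁ N₂ d₁ d₂ : ℕ}
    (C₁ : Submodule (ZMod 2) (Fin N₁ → ZMod 2)) (C₂ : Submodule (ZMod 2) (Fin N₂ → ZMod 2))
    (hd₁ : IsLeast {w | ∃ c ∈ C₁, c ≠ 0 ∧ hammingNorm c = w} d₁)
    (hd₂ : IsLeast {w | ∃ c ∈ C₂, c ≠ 0 ∧ hammingNorm c = w} d₂)
    (M : Matrix (Fin N₁) (Fin N₂) (ZMod 2))
    (hM : (∀ i, M i ∈ C₂) ∧ (∀ j, (fun i => M i j) ∈ C₁))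
    (hw : hammingNorm (fun p : Fin N₁ × Fin N₂ => M p.1 p.2) = d₁ * d₂) :
    ∃ u ∈ C₁, ∃ v ∈ C₂, hammingNorm u = d₁ ∧ hammingNorm v = d₂ ∧
      M = fun i j => u i * v j := by
  obtain ⟨hrow, hcol⟩ := hM
  have hd1pos : 0 < d₁ := by
    obtain ⟨c, _, hc0, hwc⟩ := hd₁.1
    rw [← hwc]; exact hammingNorm_pos_iff.mpr hc0
  have hd2pos : 0 < d₂ := by
    obtain ⟨c, _, hc0, hwc⟩ := hd₂.1
    rw [← hwc]; exact hammingNorm_pos_iff.mpr hc0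
  have hwr : ∑ i, hammingNorm (M i) = d₁ * d₂ := by rw [← norm_prod_rows]; exact hw
  obtain ⟨hRc, hRn⟩ := row_structure C₁ C₂ hd₁ hd₂ M hrow hcol hwr
  have hwc2 : ∑ j, hammingNorm ((fun j i => M i j) j) = d₂ * d₁ := by
    rw [mul_comm]; rw [← norm_prod_cols]; exact hw
  obtain ⟨hCc, hCn⟩ := row_structure C₂ C₁ hd₂ hd₁ (fun j i => M i j)
    (fun j => hcol j) (fun i => hrow i) hwc2
  obtain ⟨i₀, hi₀mem⟩ : (Finset.univ.filter (fun i => M i ≠ 0)).Nonempty :=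
    Finset.card_pos.mp (by rw [hRc]; exact hd1pos)
  have hi₀ : M i₀ ≠ 0 := (Finset.mem_filter.mp hi₀mem).2
  obtain ⟨j₀, hj₀mem⟩ :
      (Finset.univ.filter (fun j => (fun j i => M i j) j ≠ 0)).Nonempty :=
    Finset.card_pos.mp (by have h := hd2pos; rw [← hCc] at h; convert h)
  have hsupp : ∀ i, M i ≠ 0 → (Finset.univ.filter (fun j => M i j ≠ 0))
      = Finset.univ.filter (fun j => (fun j i => M i j) j ≠ 0) := by
    intro i hi
    apply Finset.eq_of_subset_of_card_le
    · intro j hj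
      simp only [Finset.mem_filter, Finset.mem_univ, true_and] at hj ⊢
      exact fun h0 => hj (congrFun h0 i)
    · have h1 : hammingNorm (M i) = d₂ := hRn i hi
      have h2 : hammingNorm (M i)
          = (Finset.univ.filter (fun j => M i j ≠ 0)).card := rfl
      have h3 := hCc; rw [← h1, h2] at h3; exact le_of_eq (by convert h3)
  have hj₀ : (fun i => M i j₀) ≠ 0 := (Finset.mem_filter.mp hj₀mem).2
  refine ⟨fun i => M i j₀, hcol j₀, M i₀, hrow i₀, hCn j₀ hj₀, hRn i₀ hi₀, ?_⟩
  funext i j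
  show M i j = M i j₀ * M i₀ j
  by_cases hi : M i = 0
  · rw [congrFun hi j, congrFun hi j₀]; simp
  · have hs := hsupp i hi
    have hs0 := hsupp i₀ hi₀
    have hu : M i j₀ ≠ 0 := by
      have : j₀ ∈ Finset.univ.filter (fun j => M i j ≠ 0) := by
        rw [hs]; exact hj₀mem
      exact (Finset.mem_filter.mp this).2
    rw [zmod2_eq_one_of_ne hu, one_mul]
    apply zmod2_eq_of_ne_iff
    constructor
    · intro h
      have : j ∈ Finset.univ.filter (fun j => M i₀ j ≠ 0) := by
        rw [hs0, ← hs]; simp [h]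
      exact (Finset.mem_filter.mp this).2
    · intro h
      have : j ∈ Finset.univ.filter (fun j => M i j ≠ 0) := by
        rw [hs, ← hs0]; simp [h]
      exact (Finset.mem_filter.mp this).2

lemma zmod2_mul_eq_one {a b : ZMod 2} (h : a * b = 1) : a = 1 ∧ b = 1 := by
  revert h; revert a b; decide


/-- Every minimum-weight codeword of a 2-dimensional product code is the outer
(Kronecker) product of minimum-weight codewords of the component codes; consequently
the number of codewords of weight `d₁*d₂` equals `A⁽¹⁾_{d₁} * A⁽²⁾_{d₂}`. -/
theorem product_code_min_weight_codewords {N₁ N₂ d₁ d₂ : ℕ}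
    (C₁ : Submodule (ZMod 2) (Fin N₁ → ZMod 2)) (C₂ : Submodule (ZMod 2) (Fin N₂ → ZMod 2))
    (hd₁ : IsLeast {w | ∃ c ∈ C₁, c ≠ 0 ∧ hammingNorm c = w} d₁)
    (hd₂ : IsLeast {w | ∃ c ∈ C₂, c ≠ 0 ∧ hammingNorm c = w} d₂) :
    (∀ M : Matrix (Fin N₁) (Fin N₂) (ZMod 2),
      ((∀ i, M i ∈ C₂) ∧ (∀ j, (fun i => M i j) ∈ C₁)) →
      hammingNorm (fun p : Fin N₁ × Fin N₂ => M p.1 p.2) = d₁ * d₂ →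
      ∃ u ∈ C₁, ∃ v ∈ C₂, hammingNorm u = d₁ ∧ hammingNorm v = d₂ ∧
        M = fun i j => u i * v j) ∧
    {M : Matrix (Fin N₁) (Fin N₂) (ZMod 2) |
        ((∀ i, M i ∈ C₂) ∧ (∀ j, (fun i => M i j) ∈ C₁)) ∧
        hammingNorm (fun p : Fin N₁ × Fin N₂ => M p.1 p.2) = d₁ * d₂}.ncard =
      {u | u ∈ C₁ ∧ hammingNorm u = d₁}.ncard * {v | v ∈ C₂ ∧ hammingNorm v = d₂}.ncard := by
  have hd1pos : 0 < d₁ := by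
    obtain ⟨c, _, hc0, hwc⟩ := hd₁.1
    rw [← hwc]; exact hammingNorm_pos_iff.mpr hc0
  have hd2pos : 0 < d₂ := by
    obtain ⟨c, _, hc0, hwc⟩ := hd₂.1
    rw [← hwc]; exact hammingNorm_pos_iff.mpr hc0
  refine ⟨fun M hM hw => min_weight_outer C₁ C₂ hd₁ hd₂ M hM hw, ?_⟩
  set A : Set (Fin N₁ → ZMod 2) := {u | u ∈ C₁ ∧ hammingNorm u = d₁} with hA
  set B : Set (Fin N₂ → ZMod 2) := {v | v ∈ C₂ ∧ hammingNorm v = d₂} with hB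
  set f : (Fin N₁ → ZMod 2) × (Fin N₂ → ZMod 2) → Matrix (Fin N₁) (Fin N₂) (ZMod 2) :=
    fun p => fun i j => p.1 i * p.2 j with hf
  have hset : {M : Matrix (Fin N₁) (Fin N₂) (ZMod 2) |
      ((∀ i, M i ∈ C₂) ∧ (∀ j, (fun i => M i j) ∈ C₁)) ∧
      hammingNorm (fun p : Fin N₁ × Fin N₂ => M p.1 p.2) = d₁ * d₂} = f '' (A ×ˢ B) := by
    ext M
    constructor
    · rintro ⟨hM, hw⟩
      obtain ⟨u, hu, v, hv, hnu, hnv, hMe⟩ := min_weight_outer C₁ C₂ hd₁ hd₂ M hM hw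
      exact ⟨(u, v), ⟨⟨hu, hnu⟩, ⟨hv, hnv⟩⟩, hMe.symm⟩
    · rintro ⟨⟨u, v⟩, ⟨⟨hu, hnu⟩, ⟨hv, hnv⟩⟩, rfl⟩
      refine ⟨⟨fun i => ?_, fun j => ?_⟩, ?_⟩
      · have h : (fun j => u i * v j) = u i • v := by
          funext j; simp [smul_eq_mul]
        show (fun j => u i * v j) ∈ C₂
        rw [h]; exact C₂.smul_mem _ hv
      · have h : (fun i => u i * v j) = v j • u := by
          funext i; simp [smul_eq_mul, mul_comm]
        show (fun i => u i * v j) ∈ C₁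
        rw [h]; exact C₁.smul_mem _ hu
      · show hammingNorm (fun p : Fin N₁ × Fin N₂ => u p.1 * v p.2) = d₁ * d₂
        rw [norm_outer, hnu, hnv]
  have hinj : Set.InjOn f (A ×ˢ B) := by
    rintro ⟨u, v⟩ ⟨⟨_, hnu⟩, ⟨_, hnv⟩⟩ ⟨u', v'⟩ ⟨⟨_, hnu'⟩, ⟨_, hnv'⟩⟩ heq
    have h : ∀ i j, u i * v j = u' i * v' j := fun i j =>
      congrFun (congrFun heq i) j
    have hvne : v ≠ 0 := hammingNorm_pos_iff.mp (hnv ▸ hd2pos)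
    have hune : u ≠ 0 := hammingNorm_pos_iff.mp (hnu ▸ hd1pos)
    obtain ⟨j₁, hj₁⟩ := Function.ne_iff.mp hvne
    obtain ⟨i₁, hi₁⟩ := Function.ne_iff.mp hune
    have hvj₁ : v j₁ = 1 := zmod2_eq_one_of_ne (by simpa using hj₁)
    have hui₁ : u i₁ = 1 := zmod2_eq_one_of_ne (by simpa using hi₁)
    have hu' : ∀ i, u i = u' i * v' j₁ := fun i => by
      rw [← h i j₁, hvj₁, mul_one]
    obtain ⟨hu'i₁, hv'j₁⟩ := zmod2_mul_eq_one (((hui₁.symm).trans (hu' i₁)).symm)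
    have huu : u = u' := by
      funext i; rw [hu' i, hv'j₁, mul_one]
    have hvv : v = v' := by
      funext j
      have := h i₁ j
      rwa [hui₁, hu'i₁, one_mul, one_mul] at this
    rw [Prod.ext_iff]; exact ⟨huu, hvv⟩
  rw [hset, Set.ncard_image_of_injOn hinj, ← Nat.card_coe_set_eq,
    ← Nat.card_coe_set_eq, ← Nat.card_coe_set_eq,
    Nat.card_congr (Equiv.Set.prod A B), Nat.card_prod]
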